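/- arXiv:1303.7327 — 2 statements merged into one kernel-verified Lean document; each statement's English description precedes it below -/
import Mathlib

section
/- Let σ be a consistent permutation of finite order (σⁿ is the identity for some n ≥ 1) that is a symmetry of the modal CNF formula φ, and let C be a class of pointed Kripke models closed under σ. Then Mod_C(φ) = σ(Mod_C(φ)). -/
namespace ModalSym

inductive Lit (Atom : Type) : Type
  | pos (a : Atom) : Lit Atom
  | neg (a : Atom) : Lit Atom
  deriving DecidableEq

namespace Lit
def flip {Atom : Type} : Lit Atom → Lit Atom
  | pos a => neg a
  | neg a => pos a
def atom {Atom : Type} : Lit Atom → Atom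
  | pos a => a
  | neg a => a
end Lit

/-- A permutation `σ` of literals is consistent when it commutes with negation. -/
def Consistent {Atom : Type} (σ : Lit Atom → Lit Atom) : Prop :=
  ∀ l, σ l.flip = (σ l).flip

/-- Modal CNF clauses of modal depth at most `n`: a clause is a finite set whose
elements are literals or modal literals `□ₘ C` / `¬□ₘ C` (`Bool` gives the polarity,
`true` for `□ₘ C`). -/
@[reducible] def ClauseT (Atom Mod : Type) : ℕ → Type
  | 0 => Finset (Lit Atom)
  | n+1 => Finset (Lit Atom ⊕ Bool × Mod × ClauseT Atom Mod n)

instance instDecEqClauseT {Atom Mod : Type} [DecidableEq Atom] [DecidableEq Mod] :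
    ∀ n, DecidableEq (ClauseT Atom Mod n)
  | 0 => inferInstanceAs (DecidableEq (Finset (Lit Atom)))
  | n+1 =>
    letI := instDecEqClauseT (Atom := Atom) (Mod := Mod) n
    inferInstanceAs (DecidableEq (Finset (Lit Atom ⊕ Bool × Mod × ClauseT Atom Mod n)))

/-- A modal CNF formula (of modal depth at most `n`): a finite set of clauses. -/
@[reducible] def FormT (Atom Mod : Type) (n : ℕ) : Type := Finset (ClauseT Atom Mod n)

/-- A pointed Kripke model. -/
structure KModel (Atom Mod : Type) : Type 1 where
  W : Type
  pt : W
  V : W → Set Atom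
  R : Mod → W → W → Prop

def satLit {Atom : Type} (S : Set Atom) : Lit Atom → Prop
  | .pos a => a ∈ S
  | .neg a => a ∉ S

def satClause {Atom Mod : Type} (M : KModel Atom Mod) :
    ∀ n, ClauseT Atom Mod n → M.W → Prop
  | 0, C, v => ∃ l ∈ C, satLit (M.V v) l
  | n+1, C, v => ∃ e ∈ C,
      match e with
      | Sum.inl l => satLit (M.V v) l
      | Sum.inr (b, m, C') =>
          cond b (∀ u, M.R m v u → satClause M n C' u)
                 (¬ ∀ u, M.R m v u → satClause M n C' u)

/-- `M ⊨ φ`. -/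
def satForm {Atom Mod : Type} (M : KModel Atom Mod) {n : ℕ} (φ : FormT Atom Mod n) : Prop :=
  ∀ C ∈ φ, satClause M n C M.pt

/-- `L_S`, the complete consistent set of literals generated by `S ⊆ Atom`. -/
def genLits {Atom : Type} (S : Set Atom) : Set (Lit Atom) := {l | satLit S l}

def permClause {Atom Mod : Type} [DecidableEq Atom] [DecidableEq Mod]
    (σ : Lit Atom → Lit Atom) : ∀ n, ClauseT Atom Mod n → ClauseT Atom Mod n
  | 0, C => C.image σ
  | n+1, C => C.image fun e =>
      match e with
      | Sum.inl l => Sum.inl (σ l)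
      | Sum.inr (b, m, C') => Sum.inr (b, m, permClause σ n C')

/-- The action `σ(φ)` of a permutation of literals on a modal CNF formula. -/
def permForm {Atom Mod : Type} [DecidableEq Atom] [DecidableEq Mod]
    (σ : Lit Atom → Lit Atom) {n : ℕ} (φ : FormT Atom Mod n) : FormT Atom Mod n :=
  φ.image (permClause σ n)

/-- The permuted model `σ(M)`, with `V'(v) = σ(L_{V(v)}) ∩ Atom`. -/
def permModel {Atom Mod : Type} (σ : Lit Atom → Lit Atom) (M : KModel Atom Mod) :
    KModel Atom Mod where
  W := M.W
  pt := M.pt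
  V := fun v => {a | Lit.pos a ∈ σ '' genLits (M.V v)}
  R := M.R

def IsBisim {Atom Mod : Type} (M M' : KModel Atom Mod) (Z : M.W → M'.W → Prop) : Prop :=
  Z M.pt M'.pt ∧
  (∀ v v', Z v v' → ∀ a, a ∈ M.V v ↔ a ∈ M'.V v') ∧
  (∀ v v' m u, Z v v' → M.R m v u → ∃ u', M'.R m v' u' ∧ Z u u') ∧
  (∀ v v' m u', Z v v' → M'.R m v' u' → ∃ u, M.R m v u ∧ Z u u')

def Bisimilar {Atom Mod : Type} (M M' : KModel Atom Mod) : Prop := ∃ Z, IsBisim M M' Z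

def IsSigmaSim {Atom Mod : Type} (σ : Lit Atom → Lit Atom) (M M' : KModel Atom Mod)
    (Z : M.W → M'.W → Prop) : Prop :=
  Z M.pt M'.pt ∧
  (∀ v v', Z v v' → ∀ l, l ∈ genLits (M.V v) ↔ σ l ∈ genLits (M'.V v')) ∧
  (∀ v v' m u, Z v v' → M.R m v u → ∃ u', M'.R m v' u' ∧ Z u u') ∧
  (∀ v v' m u', Z v v' → M'.R m v' u' → ∃ u, M.R m v u ∧ Z u u')

/-- `M ,→σ M'`. -/
def SigmaSim {Atom Mod : Type} (σ : Lit Atom → Lit Atom) (M M' : KModel Atom Mod) : Prop :=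
  ∃ Z, IsSigmaSim σ M M' Z

/-- `IsPathFrom M v p`: `p` is a valid path (list of (modality, state) steps) starting at `v`. -/
def IsPathFrom {Atom Mod : Type} (M : KModel Atom Mod) : M.W → List (Mod × M.W) → Prop
  | _, [] => True
  | v, s :: rest => M.R s.1 v s.2 ∧ IsPathFrom M s.2 rest

def pathLast {Atom Mod : Type} (M : KModel Atom Mod) : M.W → List (Mod × M.W) → M.W
  | v, [] => v
  | _, s :: rest => pathLast M s.2 rest

/-- A tree model: every state is the last state of exactly one rooted path. -/
def IsTree {Atom Mod : Type} (M : KModel Atom Mod) : Prop :=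
  ∀ v : M.W, ∃! p : List (Mod × M.W), IsPathFrom M M.pt p ∧ pathLast M M.pt p = v

/-- The depth of a state: the (minimal) length of a rooted path leading to it. -/
noncomputable def depth {Atom Mod : Type} (M : KModel Atom Mod) (v : M.W) : ℕ :=
  sInf {d | ∃ p, IsPathFrom M M.pt p ∧ pathLast M M.pt p = v ∧ p.length = d}

/-- The unravelling `T(M)`. -/
def unravel {Atom Mod : Type} (M : KModel Atom Mod) : KModel Atom Mod where
  W := {p : List (Mod × M.W) // IsPathFrom M M.pt p}
  pt := ⟨[], trivial⟩
  V := fun p => M.V (pathLast M M.pt p.1)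
  R := fun m p p' => ∃ v, p'.1 = p.1 ++ [(m, v)]

/-- `head(σ̄)`: the first permutation of the sequence, identity for the empty sequence. -/
def headP {Atom : Type} (σs : List (Lit Atom → Lit Atom)) : Lit Atom → Lit Atom :=
  σs.headD id

def lpermClause {Atom Mod : Type} [DecidableEq Atom] [DecidableEq Mod]
    (σs : List (Lit Atom → Lit Atom)) : ∀ n, ClauseT Atom Mod n → ClauseT Atom Mod n
  | 0, C => C.image (headP σs)
  | n+1, C => C.image fun e =>
      match e with
      | Sum.inl l => Sum.inl (headP σs l)
      | Sum.inr (b, m, C') => Sum.inr (b, m, lpermClause σs.tail n C')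

/-- The action `σ̄(φ)` of a permutation sequence on a modal CNF formula. -/
def lpermForm {Atom Mod : Type} [DecidableEq Atom] [DecidableEq Mod]
    (σs : List (Lit Atom → Lit Atom)) {n : ℕ} (φ : FormT Atom Mod n) : FormT Atom Mod n :=
  φ.image (lpermClause σs n)

/-- The layered permuted model `σ̄(M)` (meaningful on tree models):
at a state of depth `d` the permutation `head(σ̄_{d+1})` is used. -/
noncomputable def lpermModel {Atom Mod : Type} (σs : List (Lit Atom → Lit Atom))
    (M : KModel Atom Mod) : KModel Atom Mod where
  W := M.W
  pt := M.pt
  V := fun v => {a | Lit.pos a ∈ headP (σs.drop (depth M v)) '' genLits (M.V v)}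
  R := M.R

def IsLSim {Atom Mod : Type} (σs : List (Lit Atom → Lit Atom)) (M M' : KModel Atom Mod)
    (Z : ℕ → M.W → M'.W → Prop) : Prop :=
  Z 0 M.pt M'.pt ∧
  (∀ i v v', Z i v v' →
    ∀ l, l ∈ genLits (M.V v) ↔ headP (σs.drop i) l ∈ genLits (M'.V v')) ∧
  (∀ i v v' m u, Z i v v' → M.R m v u → ∃ u', M'.R m v' u' ∧ Z (i+1) u u') ∧
  (∀ i v v' m u', Z i v v' → M'.R m v' u' → ∃ u, M.R m v u ∧ Z (i+1) u u')

/-- `M ,→σ̄ M'`. -/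
def LSim {Atom Mod : Type} (σs : List (Lit Atom → Lit Atom)) (M M' : KModel Atom Mod) : Prop :=
  ∃ Z, IsLSim σs M M' Z

/-- `Mod_C(φ)`: the models in the class `𝒞` satisfying `φ`. -/
def ModC {Atom Mod : Type} (𝒞 : Set (KModel Atom Mod)) {n : ℕ} (φ : FormT Atom Mod n) :
    Set (KModel Atom Mod) := {M ∈ 𝒞 | satForm M φ}

/-- `φ ⊨_C ψ`. -/
def Entails {Atom Mod : Type} (𝒞 : Set (KModel Atom Mod)) {n₁ n₂ : ℕ}
    (φ : FormT Atom Mod n₁) (ψ : FormT Atom Mod n₂) : Prop :=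
  ModC 𝒞 φ ⊆ ModC 𝒞 ψ


section Aux

variable {Atom Mod : Type}

lemma flip_flip (l : Lit Atom) : l.flip.flip = l := by cases l <;> rfl

lemma mem_or_flip_mem (S : Set Atom) (l : Lit Atom) :
    l ∈ genLits S ∨ l.flip ∈ genLits S := by
  cases l with
  | pos a => by_cases h : a ∈ S
             · exact Or.inl h
             · exact Or.inr h
  | neg a => by_cases h : a ∈ S
             · exact Or.inr h
             · exact Or.inl h

lemma not_both_mem (S : Set Atom) (l : Lit Atom) :
    ¬ (l ∈ genLits S ∧ l.flip ∈ genLits S) := by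
  cases l with
  | pos a => rintro ⟨h1, h2⟩; exact h2 h1
  | neg a => rintro ⟨h1, h2⟩; exact h1 h2

lemma genLits_perm (σ : Lit Atom → Lit Atom) (hbij : Function.Bijective σ)
    (hcons : Consistent σ) (S : Set Atom) :
    genLits {a | Lit.pos a ∈ σ '' genLits S} = σ '' genLits S := by
  have key : ∀ l : Lit Atom, l ∈ σ '' genLits S ↔ l.flip ∉ σ '' genLits S := by
    intro l
    constructor
    · rintro ⟨x, hx, rfl⟩ ⟨y, hy, hyl⟩
      rw [← hcons] at hyl
      have := hbij.injective hyl
      subst this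
      exact not_both_mem S x ⟨hx, hy⟩
    · intro h
      obtain ⟨x, rfl⟩ := hbij.surjective l
      rcases mem_or_flip_mem S x with hx | hx
      · exact ⟨x, hx, rfl⟩
      · exact absurd ⟨x.flip, hx, hcons x⟩ h
  ext l
  cases l with
  | pos a => exact Iff.rfl
  | neg a =>
      have hk := key (Lit.pos a)
      simp only [Lit.flip] at hk
      show Lit.pos a ∉ σ '' genLits S ↔ Lit.neg a ∈ σ '' genLits S
      rw [hk]
      exact not_not

lemma permModel_comp (σ τ : Lit Atom → Lit Atom) (hbij : Function.Bijective τ)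
    (hcons : Consistent τ) (M : KModel Atom Mod) :
    permModel σ (permModel τ M) = permModel (σ ∘ τ) M := by
  cases M with
  | mk W pt V R =>
      simp only [permModel, KModel.mk.injEq, heq_eq_eq, true_and, and_true]
      funext v
      rw [genLits_perm τ hbij hcons (V v)]
      ext a
      simp [Set.image_image]

lemma permModel_id (M : KModel Atom Mod) : permModel (id : Lit Atom → Lit Atom) M = M := by
  cases M with
  | mk W pt V R =>
      simp only [permModel, KModel.mk.injEq, heq_eq_eq, true_and, and_true]
      funext v
      ext a
      simp [genLits, satLit]

lemma consistent_iterate {σ : Lit Atom → Lit Atom} (hcons : Consistent σ) :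
    ∀ j, Consistent (σ^[j])
  | 0 => fun l => rfl
  | j+1 => by
      intro l
      rw [Function.iterate_succ']
      simp only [Function.comp_apply]
      rw [consistent_iterate hcons j l, hcons]

lemma bijective_iterate {σ : Lit Atom → Lit Atom} (hbij : Function.Bijective σ) :
    ∀ j, Function.Bijective (σ^[j])
  | 0 => Function.bijective_id
  | j+1 => by
      rw [Function.iterate_succ']
      exact hbij.comp (bijective_iterate hbij j)

lemma permModel_iterate (σ : Lit Atom → Lit Atom) (hbij : Function.Bijective σ)
    (hcons : Consistent σ) (M : KModel Atom Mod) :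
    ∀ j, (permModel σ)^[j] M = permModel (σ^[j]) M
  | 0 => (permModel_id M).symm
  | j+1 => by
      rw [Function.iterate_succ_apply', permModel_iterate σ hbij hcons M j,
        permModel_comp σ (σ^[j]) (bijective_iterate hbij j) (consistent_iterate hcons j),
        ← Function.iterate_succ']

lemma satClause_perm [DecidableEq Atom] [DecidableEq Mod]
    (σ : Lit Atom → Lit Atom) (hbij : Function.Bijective σ) (hcons : Consistent σ)
    (M : KModel Atom Mod) :
    ∀ n (C : ClauseT Atom Mod n) (v : M.W),
      satClause (permModel σ M) n (permClause σ n C) v ↔ satClause M n C v := by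
  intro n
  induction n with
  | zero =>
      intro C v
      simp only [satClause, permClause, Finset.mem_image]
      constructor
      · rintro ⟨l', ⟨l, hl, rfl⟩, hsat⟩
        refine ⟨l, hl, ?_⟩
        have : σ l ∈ genLits ((permModel σ M).V v) := hsat
        rw [show (permModel σ M).V v = {a | Lit.pos a ∈ σ '' genLits (M.V v)} from rfl,
          genLits_perm σ hbij hcons] at this
        exact (Function.Injective.mem_set_image hbij.injective).mp this
      · rintro ⟨l, hl, hsat⟩
        refine ⟨σ l, ⟨l, hl, rfl⟩, ?_⟩
        show σ l ∈ genLits ((permModel σ M).V v)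
        rw [show (permModel σ M).V v = {a | Lit.pos a ∈ σ '' genLits (M.V v)} from rfl,
          genLits_perm σ hbij hcons]
        exact ⟨l, hsat, rfl⟩
  | succ n ih =>
      intro C v
      simp only [satClause, permClause, Finset.mem_image]
      constructor
      · rintro ⟨e', ⟨e, he, rfl⟩, hsat⟩
        refine ⟨e, he, ?_⟩
        cases e with
        | inl l =>
            simp only at hsat ⊢
            have : σ l ∈ genLits ((permModel σ M).V v) := hsat
            rw [show (permModel σ M).V v = {a | Lit.pos a ∈ σ '' genLits (M.V v)} from rfl,
              genLits_perm σ hbij hcons] at this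
            exact (Function.Injective.mem_set_image hbij.injective).mp this
        | inr p =>
            obtain ⟨b, m, C'⟩ := p
            cases b with
            | true =>
                simp only [cond] at hsat ⊢
                intro u hu
                exact (ih C' u).mp (hsat u hu)
            | false =>
                simp only [cond] at hsat ⊢
                intro h
                exact hsat (fun u hu => (ih C' u).mpr (h u hu))
      · rintro ⟨e, he, hsat⟩
        refine ⟨_, ⟨e, he, rfl⟩, ?_⟩
        cases e with
        | inl l =>
            simp only
            show σ l ∈ genLits ((permModel σ M).V v)
            rw [show (permModel σ M).V v = {a | Lit.pos a ∈ σ '' genLits (M.V v)} from rfl,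
              genLits_perm σ hbij hcons]
            exact ⟨l, hsat, rfl⟩
        | inr p =>
            obtain ⟨b, m, C'⟩ := p
            cases b with
            | true =>
                simp only [cond] at hsat ⊢
                intro u hu
                exact (ih C' u).mpr (hsat u hu)
            | false =>
                simp only [cond] at hsat ⊢
                intro h
                exact hsat (fun u hu => (ih C' u).mp (h u hu))

lemma satForm_perm [DecidableEq Atom] [DecidableEq Mod]
    (σ : Lit Atom → Lit Atom) (hbij : Function.Bijective σ) (hcons : Consistent σ)
    (M : KModel Atom Mod) {n : ℕ} (φ : FormT Atom Mod n) :
    satForm (permModel σ M) (permForm σ φ) ↔ satForm M φ := by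
  constructor
  · intro h C hC
    exact (satClause_perm σ hbij hcons M n C M.pt).mp
      (h _ (Finset.mem_image_of_mem _ hC))
  · intro h C hC
    rw [permForm, Finset.mem_image] at hC
    obtain ⟨C', hC', rfl⟩ := hC
    exact (satClause_perm σ hbij hcons M n C' M.pt).mpr (h C' hC')

end Aux

/-- for a finite-order consistent symmetry `σ` of `φ` and a class `𝒞`
closed under `σ`, `Mod_𝒞(φ) = σ(Mod_𝒞(φ))`. -/
theorem modC_eq_perm_modC {Atom Mod : Type} [Countable Atom] [Countable Mod]
    [DecidableEq Atom] [DecidableEq Mod]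
    (σ : Lit Atom → Lit Atom) (hbij : Function.Bijective σ) (hcons : Consistent σ)
    (hord : ∃ k : ℕ, 1 ≤ k ∧ σ^[k] = id)
    {n : ℕ} (φ : FormT Atom Mod n) (hsym : permForm σ φ = φ)
    (𝒞 : Set (KModel Atom Mod)) (hclosed : ∀ M ∈ 𝒞, permModel σ M ∈ 𝒞) :
    ModC 𝒞 φ = permModel σ '' ModC 𝒞 φ := by
  obtain ⟨k, hk1, hk⟩ := hord
  have hstep : ∀ M, M ∈ ModC 𝒞 φ → permModel σ M ∈ ModC 𝒞 φ := by
    rintro M ⟨hM𝒞, hMφ⟩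
    refine ⟨hclosed M hM𝒞, ?_⟩
    have := (satForm_perm σ hbij hcons M φ).mpr hMφ
    rwa [hsym] at this
  have hiter : ∀ j M, M ∈ ModC 𝒞 φ → (permModel σ)^[j] M ∈ ModC 𝒞 φ := by
    intro j
    induction j with
    | zero => intro M h; exact h
    | succ j ih =>
        intro M h
        rw [Function.iterate_succ_apply']
        exact hstep _ (ih M h)
  apply Set.Subset.antisymm
  · intro M hM
    refine ⟨(permModel σ)^[k-1] M, hiter (k-1) M hM, ?_⟩
    rw [permModel_iterate σ hbij hcons M (k-1),
      permModel_comp σ _ (bijective_iterate hbij (k-1)) (consistent_iterate hcons (k-1)),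
      ← Function.iterate_succ', Nat.succ_eq_add_one, Nat.sub_add_cancel hk1, hk,
      permModel_id]
  · rintro _ ⟨M, hM, rfl⟩
    exact hstep M hM

end ModalSym
end

section
/- Let σ̄ be a consistent permutation sequence, M a tree model and φ a modal CNF formula. Then M ⊨ φ if and only if σ̄(M) ⊨ σ̄(φ). -/
namespace ModalSym

lemma satLit_flip {Atom : Type} (S : Set Atom) (l : Lit Atom) :
    satLit S l.flip ↔ ¬ satLit S l := by
  cases l <;> simp [satLit, Lit.flip]

lemma satLit_perm {Atom : Type} (σ : Lit Atom → Lit Atom)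
    (hb : Function.Bijective σ) (hc : Consistent σ) (S : Set Atom) (l : Lit Atom) :
    satLit S l ↔ satLit {a | Lit.pos a ∈ σ '' genLits S} (σ l) := by
  have fwd : ∀ l : Lit Atom, satLit S l → satLit {a | Lit.pos a ∈ σ '' genLits S} (σ l) := by
    intro l hl
    cases h : σ l with
    | pos b =>
      show Lit.pos b ∈ σ '' genLits S
      exact ⟨l, hl, h⟩
    | neg b =>
      show Lit.pos b ∉ σ '' genLits S
      rintro ⟨l', hl', heq⟩
      have : σ l' = σ l.flip := by
        rw [hc l, h, heq]; rfl
      have : l' = l.flip := hb.1 this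
      subst this
      exact (satLit_flip S l).mp hl' hl
  constructor
  · exact fwd l
  · intro hσl
    by_contra h
    have hflip : satLit S l.flip := (satLit_flip S l).mpr h
    have := fwd l.flip hflip
    rw [hc l] at this
    exact (satLit_flip _ (σ l)).mp this hσl

lemma headP_mem_or_id {Atom : Type} (σs : List (Lit Atom → Lit Atom)) (i : ℕ) :
    headP (σs.drop i) ∈ σs ∨ headP (σs.drop i) = id := by
  cases h : σs.drop i with
  | nil => right; rfl
  | cons σ t =>
    left
    have : σ ∈ σs.drop i := h ▸ (List.mem_cons_self : σ ∈ σ :: t)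
    have := List.drop_subset i σs this
    simpa [headP, h] using this

lemma headP_bij {Atom : Type} (σs : List (Lit Atom → Lit Atom))
    (hb : ∀ σ ∈ σs, Function.Bijective σ) (i : ℕ) :
    Function.Bijective (headP (σs.drop i)) := by
  rcases headP_mem_or_id σs i with h | h
  · exact hb _ h
  · rw [h]; exact Function.bijective_id

lemma headP_cons {Atom : Type} (σs : List (Lit Atom → Lit Atom))
    (hc : ∀ σ ∈ σs, Consistent σ) (i : ℕ) :
    Consistent (headP (σs.drop i)) := by
  rcases headP_mem_or_id σs i with h | h
  · exact hc _ h
  · rw [h]; intro l; rfl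

lemma isPathFrom_append {Atom Mod : Type} (M : KModel Atom Mod) :
    ∀ (p q : List (Mod × M.W)) (v : M.W),
      IsPathFrom M v (p ++ q) ↔ IsPathFrom M v p ∧ IsPathFrom M (pathLast M v p) q := by
  intro p
  induction p with
  | nil => intro q v; simp [IsPathFrom, pathLast]
  | cons s rest ih =>
    intro q v
    simp [IsPathFrom, pathLast, ih, and_assoc]

lemma pathLast_append {Atom Mod : Type} (M : KModel Atom Mod) :
    ∀ (p q : List (Mod × M.W)) (v : M.W),
      pathLast M v (p ++ q) = pathLast M (pathLast M v p) q := by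
  intro p
  induction p with
  | nil => intro q v; rfl
  | cons s rest ih => intro q v; simp [pathLast, ih]

lemma depth_eq_of_path {Atom Mod : Type} (M : KModel Atom Mod) (htree : IsTree M)
    (v : M.W) (p : List (Mod × M.W)) (hp : IsPathFrom M M.pt p)
    (hl : pathLast M M.pt p = v) : depth M v = p.length := by
  obtain ⟨q, hq, huniq⟩ := htree v
  have hpq : p = q := huniq p ⟨hp, hl⟩
  have hset : {d | ∃ r, IsPathFrom M M.pt r ∧ pathLast M M.pt r = v ∧ r.length = d}
      = {p.length} := by
    ext d
    constructor
    · rintro ⟨r, hr, hrl, rfl⟩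
      have : r = q := huniq r ⟨hr, hrl⟩
      simp [this, hpq]
    · rintro rfl
      exact ⟨p, hp, hl, rfl⟩
  rw [depth, hset, csInf_singleton]

lemma depth_succ {Atom Mod : Type} (M : KModel Atom Mod) (htree : IsTree M)
    {m : Mod} {v u : M.W} (h : M.R m v u) : depth M u = depth M v + 1 := by
  obtain ⟨p, ⟨hp, hl⟩, _⟩ := htree v
  have hp' : IsPathFrom M M.pt (p ++ [(m, u)]) := by
    rw [isPathFrom_append]
    exact ⟨hp, by rw [hl]; exact ⟨h, trivial⟩⟩
  have hl' : pathLast M M.pt (p ++ [(m, u)]) = u := by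
    rw [pathLast_append, hl]; rfl
  rw [depth_eq_of_path M htree u _ hp' hl', depth_eq_of_path M htree v p hp hl]
  simp

lemma depth_pt {Atom Mod : Type} (M : KModel Atom Mod) (htree : IsTree M) :
    depth M M.pt = 0 :=
  depth_eq_of_path M htree M.pt [] trivial rfl

lemma tail_drop' {α : Type} (l : List α) (n : ℕ) : (l.drop n).tail = l.drop (n + 1) := by
  rw [← List.drop_one, List.drop_drop]

lemma satClause_lperm {Atom Mod : Type} [DecidableEq Atom] [DecidableEq Mod]
    (σs : List (Lit Atom → Lit Atom))
    (hbij : ∀ σ ∈ σs, Function.Bijective σ) (hcons : ∀ σ ∈ σs, Consistent σ)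
    (M : KModel Atom Mod) (htree : IsTree M) :
    ∀ (n : ℕ) (C : ClauseT Atom Mod n) (v : M.W),
      satClause M n C v ↔
        satClause (lpermModel σs M) n (lpermClause (σs.drop (depth M v)) n C) v := by
  intro n
  induction n with
  | zero =>
    intro C v
    have key := satLit_perm (headP (σs.drop (depth M v)))
      (headP_bij σs hbij _) (headP_cons σs hcons _) (M.V v)
    constructor
    · rintro ⟨l, hl, hsat⟩
      exact ⟨_, Finset.mem_image_of_mem _ hl, (key l).mp hsat⟩
    · rintro ⟨l', hl', hsat⟩
      obtain ⟨l, hl, rfl⟩ := Finset.mem_image.mp hl'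
      exact ⟨l, hl, (key l).mpr hsat⟩
  | succ n ih =>
    intro C v
    have key := satLit_perm (headP (σs.drop (depth M v)))
      (headP_bij σs hbij _) (headP_cons σs hcons _) (M.V v)
    have hbox : ∀ (m : Mod) (C' : ClauseT Atom Mod n),
        (∀ u, M.R m v u → satClause M n C' u) ↔
        (∀ u, (lpermModel σs M).R m v u →
          satClause (lpermModel σs M) n
            (lpermClause (σs.drop (depth M v)).tail n C') u) := by
      intro m C'
      apply forall_congr'
      intro u
      constructor
      · intro h hr
        rw [tail_drop', ← depth_succ M htree hr]
        exact (ih C' u).mp (h hr)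
      · intro h hr
        have := h hr
        rw [tail_drop', ← depth_succ M htree hr] at this
        exact (ih C' u).mpr this
    constructor
    · rintro ⟨e, he, hsat⟩
      match e with
      | Sum.inl l =>
        exact ⟨_, Finset.mem_image_of_mem _ he, (key l).mp hsat⟩
      | Sum.inr (b, m, C') =>
        refine ⟨_, Finset.mem_image_of_mem _ he, ?_⟩
        cases b
        · simpa using fun h => hsat ((hbox m C').mpr h)
        · simpa using (hbox m C').mp hsat
    · rintro ⟨e', he', hsat⟩
      obtain ⟨e, he, rfl⟩ := Finset.mem_image.mp he'
      match e with
      | Sum.inl l =>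
        exact ⟨_, he, (key l).mpr hsat⟩
      | Sum.inr (b, m, C') =>
        refine ⟨_, he, ?_⟩
        cases b
        · simpa using fun h => hsat ((hbox m C').mp h)
        · simpa using (hbox m C').mpr hsat

/-- for a tree model `M`, `M ⊨ φ` iff `σ̄(M) ⊨ σ̄(φ)`. -/
theorem sat_iff_lpermModel_lpermForm {Atom Mod : Type} [Countable Atom] [Countable Mod]
    [DecidableEq Atom] [DecidableEq Mod]
    (σs : List (Lit Atom → Lit Atom))
    (hbij : ∀ σ ∈ σs, Function.Bijective σ) (hcons : ∀ σ ∈ σs, Consistent σ)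
    (M : KModel Atom Mod) (htree : IsTree M)
    {n : ℕ} (φ : FormT Atom Mod n) :
    satForm M φ ↔ satForm (lpermModel σs M) (lpermForm σs φ) := by
  have key : ∀ C : ClauseT Atom Mod n,
      satClause M n C M.pt ↔ satClause (lpermModel σs M) n (lpermClause σs n C) M.pt := by
    intro C
    have := satClause_lperm σs hbij hcons M htree n C M.pt
    rwa [depth_pt M htree, List.drop_zero] at this
  constructor
  · intro h C' hC'
    obtain ⟨C, hC, rfl⟩ := Finset.mem_image.mp hC'
    exact (key C).mp (h C hC)
  · intro h C hC
    exact (key C).mpr (h _ (Finset.mem_image_of_mem _ hC))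

end ModalSym
end
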